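/- Under the construction hypotheses (a distributive lattice D, groups G_α, and transitive isomorphisms φ_{α,β} for β ≤ α with ψ = φ^{-1}), the operations on S = Σ_{α∈D} G_α satisfy the right distributive law: (x + y)·z = x·z + y·z for all x, y, z ∈ S. -/

import Mathlib

variable {D : Type*} [DistribLattice D] {G : D → Type*} [∀ α : D, Group (G α)]

/-- Multiplication on the disjoint union `S = Σ α, G α`:
`(α, x) · (β, y) = (αβ, φ_{α,αβ}(x) · φ_{β,αβ}(y))`. -/
def cMul (φ : ∀ α β : D, β ≤ α → (G α ≃* G β)) (s t : Σ α : D, G α) :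
    Σ α : D, G α :=
  ⟨s.1 ⊓ t.1,
    φ s.1 (s.1 ⊓ t.1) inf_le_left s.2 * φ t.1 (s.1 ⊓ t.1) inf_le_right t.2⟩

/-- Addition on the disjoint union `S = Σ α, G α`:
`(α, x) + (β, y) = (α + β, ψ_{α,α+β}(x))`, where `ψ_{β,α} = (φ_{α,β})⁻¹`
for `β ≤ α` (each `G α` carries the left-zero addition). -/
def cAdd (φ : ∀ α β : D, β ≤ α → (G α ≃* G β)) (s t : Σ α : D, G α) :
    Σ α : D, G α :=
  ⟨s.1 ⊔ t.1, (φ (s.1 ⊔ t.1) s.1 le_sup_left).symm s.2⟩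

/-- Under the construction hypotheses, the operations on
`S = Σ α, G α` satisfy the right distributive law:
`(x + y) · z = x·z + y·z` for all `x, y, z ∈ S`. -/
theorem construction_right_distrib
    (φ : ∀ α β : D, β ≤ α → (G α ≃* G β))
    (hφ_id : ∀ (α : D) (x : G α), φ α α le_rfl x = x)
    (hφ_trans : ∀ {α β γ : D} (h1 : γ ≤ β) (h2 : β ≤ α) (x : G α),
      φ β γ h1 (φ α β h2 x) = φ α γ (h1.trans h2) x)
    (x y z : Σ α : D, G α) :
    cMul φ (cAdd φ x y) z = cAdd φ (cMul φ x z) (cMul φ y z) := by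

  obtain ⟨α, a⟩ := x
  obtain ⟨β, b⟩ := y
  obtain ⟨γ, c⟩ := z
  have cast_eq : ∀ {m₁ m₂ : D} (h : m₁ = m₂) (v : G m₁), φ m₁ m₂ h.ge v = h ▸ v := by
    intro m₁ m₂ h v; subst h; exact hφ_id _ _
  have h : (α ⊔ β) ⊓ γ = (α ⊓ γ) ⊔ (β ⊓ γ) := inf_sup_right α β γ
  simp only [cMul, cAdd]
  refine Sigma.ext h ?_
  have key : (φ ((α ⊓ γ) ⊔ (β ⊓ γ)) (α ⊓ γ) le_sup_left).symm
      (φ α (α ⊓ γ) inf_le_left a * φ γ (α ⊓ γ) inf_le_right c)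
      = φ ((α ⊔ β) ⊓ γ) ((α ⊓ γ) ⊔ (β ⊓ γ)) h.ge
        (φ (α ⊔ β) ((α ⊔ β) ⊓ γ) inf_le_left
            ((φ (α ⊔ β) α le_sup_left).symm a)
          * φ γ ((α ⊔ β) ⊓ γ) inf_le_right c) := by
    rw [MulEquiv.symm_apply_eq, map_mul, map_mul, hφ_trans, hφ_trans, hφ_trans, hφ_trans]
    congr 1
    have := hφ_trans (α := α ⊔ β) (β := α) (γ := α ⊓ γ) inf_le_left le_sup_left
      ((φ (α ⊔ β) α le_sup_left).symm a)
    rw [MulEquiv.apply_symm_apply] at this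
    exact this
  show HEq (φ (α ⊔ β) ((α ⊔ β) ⊓ γ) inf_le_left ((φ (α ⊔ β) α le_sup_left).symm a)
      * φ γ ((α ⊔ β) ⊓ γ) inf_le_right c)
    ((φ ((α ⊓ γ) ⊔ (β ⊓ γ)) (α ⊓ γ) le_sup_left).symm
      (φ α (α ⊓ γ) inf_le_left a * φ γ (α ⊓ γ) inf_le_right c))
  rw [key, cast_eq h]
  exact (eqRec_heq h _).symm
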